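/- A proper coloring of a graph G is Dom-compelling (every rainbow committee, i.e., set consisting of one vertex of each color, is a dominating set of G) if and only if it is a dominator coloring (every vertex of G dominates all vertices of at least one color class). -/
import Mathlib


open SimpleGraph

/-- A proper coloring of `G` with `k` colors. -/
def ProperColoring {V : Type*} {k : ℕ} (G : SimpleGraph V) (c : V → Fin k) : Prop :=
  ∀ ⦃u v : V⦄, G.Adj u v → c u ≠ c v

/-- `f` selects a rainbow committee of the coloring `c`: one vertex of each color. -/
def IsRainbow {V : Type*} {k : ℕ} (c : V → Fin k) (f : Fin k → V) : Prop :=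
  ∀ i : Fin k, c (f i) = i

/-- The coloring `c` compels property `P`: every rainbow committee has property `P`. -/
def Compels {V : Type*} {k : ℕ} (c : V → Fin k) (P : Set V → Prop) : Prop :=
  ∀ f : Fin k → V, IsRainbow c f → P (Set.range f)

/-- The `P`-compelling chromatic number of `G`: the least number of colors in a proper
coloring, using every color, in which every rainbow committee has property `P`. -/
noncomputable def compellingChromNum {V : Type*} (G : SimpleGraph V) (P : Set V → Prop) : ℕ :=
  sInf {k : ℕ | ∃ c : V → Fin k,
    ProperColoring G c ∧ Function.Surjective c ∧ Compels c P}

/-- A proper coloring (each color used) is Dom-compelling (every rainbow committee is a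
dominating set) iff it is a dominator coloring (every vertex dominates some color class). -/
theorem dom_compelling_iff_dominator_coloring {V : Type*} [Fintype V] (G : SimpleGraph V)
    {k : ℕ} (c : V → Fin k) (hp : ProperColoring G c) (hs : Function.Surjective c) :
    Compels c (fun S => ∀ v : V, v ∈ S ∨ ∃ u ∈ S, G.Adj u v) ↔
      ∀ v : V, ∃ i : Fin k, ∀ u : V, c u = i → u = v ∨ G.Adj v u := by
  constructor
  · intro h v
    by_contra hc
    push_neg at hc
    choose f hf hne hna using hc
    rcases h f hf v with hv | ⟨u, ⟨i, rfl⟩, hadj⟩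
    · obtain ⟨i, hi⟩ := hv
      exact hne i hi
    · exact hna i hadj.symm
  · intro h f hf v
    obtain ⟨i, hi⟩ := h v
    rcases hi (f i) (hf i) with heq | hadj
    · exact Or.inl ⟨i, heq⟩
    · exact Or.inr ⟨f i, ⟨i, rfl⟩, hadj.symm⟩
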